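/- Let $\vec\lambda=(\lambda_1,\dots,\lambda_d)\in\mathbb{R}^d$, $D(\vec\lambda)$ the corresponding diagonal matrix, $J_d$ the orthogonal projection of Hermitian matrices onto their diagonal parts, and $\bar J_d(H) = (\frac{1}{d}\mathrm{Tr}\,H)\,\mathrm{Id}_d$. Then $\int_{U(d)} \|J_d(U^* D(\vec\lambda) U) - \bar J_d(D(\vec\lambda))\|^2\, dU = \frac{\mathcal{S}_2(\vec\lambda)}{d+1} - \frac{\mathcal{S}_1(\vec\lambda)^2}{d(d+1)}$, where $\mathcal{S}_k(\vec\lambda) = \sum_j \lambda_j^k$ and integration is with respect to Haar probability measure on the unitary group $U(d)$. -/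

import Mathlib

open MeasureTheory

noncomputable instance matrixMeasurableSpace {m n : Type*} : MeasurableSpace (Matrix m n ℂ) :=
  MeasurableSpace.pi

open Complex Matrix

noncomputable section StmtAux

abbrev Gd (d : ℕ) := Matrix.unitaryGroup (Fin d) ℂ

variable {d : ℕ}

/-! ### Basic measurability and bounds -/

lemma measE (k j : Fin d) : Measurable (fun U : Gd d => (U : Matrix (Fin d) (Fin d) ℂ) k j) :=
  ((measurable_pi_apply k).comp (measurable_subtype_coe)).eval

lemma mulMeas (V : Gd d) : Measurable (fun U : Gd d => V * U) := by
  apply Measurable.subtype_mk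
  apply measurable_pi_iff.2; intro i; apply measurable_pi_iff.2; intro j
  simp only [Matrix.mul_apply]
  exact Finset.measurable_sum _ fun m _ => (measE m j).const_mul _

lemma colsum (U : Gd d) (j : Fin d) :
    ∑ m, Complex.normSq ((U : Matrix (Fin d) (Fin d) ℂ) m j) = 1 := by
  have h := U.2.1
  have h2 := congrArg (fun M : Matrix (Fin d) (Fin d) ℂ => M j j) h
  simp only [Matrix.mul_apply, Matrix.star_apply, Matrix.one_apply_eq, Complex.star_def,
    ← Complex.normSq_eq_conj_mul_self] at h2
  have h3 : ((∑ m, Complex.normSq ((U : Matrix (Fin d) (Fin d) ℂ) m j) : ℝ) : ℂ) = 1 := by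
    push_cast; exact h2
  exact_mod_cast h3

/-- The key diagonal observable. -/
def ent (k j : Fin d) (U : Gd d) : ℝ := Complex.normSq ((U : Matrix (Fin d) (Fin d) ℂ) k j)

lemma ent_nonneg (k j : Fin d) (U : Gd d) : 0 ≤ ent k j U := Complex.normSq_nonneg _

lemma sum_ent (U : Gd d) (j : Fin d) : ∑ k, ent k j U = 1 := colsum U j

lemma ent_le_one (k j : Fin d) (U : Gd d) : ent k j U ≤ 1 := by
  rw [← sum_ent U j]
  exact Finset.single_le_sum (f := fun m => ent m j U)
    (fun m _ => ent_nonneg m j U) (Finset.mem_univ k)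

lemma ent_meas (k j : Fin d) : Measurable (ent k j) := by
  have h : ent k j = fun U : Gd d =>
      ((U : Matrix (Fin d) (Fin d) ℂ) k j).re * ((U : Matrix (Fin d) (Fin d) ℂ) k j).re
      + ((U : Matrix (Fin d) (Fin d) ℂ) k j).im * ((U : Matrix (Fin d) (Fin d) ℂ) k j).im := by
    funext U; simp [ent, Complex.normSq_apply]
  rw [h]
  exact ((Complex.measurable_re.comp (measE k j)).mul
    (Complex.measurable_re.comp (measE k j))).add
    ((Complex.measurable_im.comp (measE k j)).mul (Complex.measurable_im.comp (measE k j)))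

/-- Real part of the cross term. -/
def rE (k k' j : Fin d) (U : Gd d) : ℝ :=
  ((U : Matrix (Fin d) (Fin d) ℂ) k j * (starRingEnd ℂ) ((U : Matrix (Fin d) (Fin d) ℂ) k' j)).re

/-- Imaginary part of the cross term. -/
def sE (k k' j : Fin d) (U : Gd d) : ℝ :=
  ((U : Matrix (Fin d) (Fin d) ℂ) k j * (starRingEnd ℂ) ((U : Matrix (Fin d) (Fin d) ℂ) k' j)).im

lemma rs_sq (k k' j : Fin d) (U : Gd d) :
    rE k k' j U * rE k k' j U + sE k k' j U * sE k k' j U = ent k j U * ent k' j U := by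
  have h : ent k j U * ent k' j U = Complex.normSq
      ((U : Matrix (Fin d) (Fin d) ℂ) k j *
        (starRingEnd ℂ) ((U : Matrix (Fin d) (Fin d) ℂ) k' j)) := by
    simp [ent, Complex.normSq_conj]
  rw [h, Complex.normSq_apply]; rfl

lemma rE_meas (k k' j : Fin d) : Measurable (rE k k' j) := by
  have h : rE k k' j = fun U : Gd d =>
      ((U : Matrix (Fin d) (Fin d) ℂ) k j).re * ((U : Matrix (Fin d) (Fin d) ℂ) k' j).re
      + ((U : Matrix (Fin d) (Fin d) ℂ) k j).im * ((U : Matrix (Fin d) (Fin d) ℂ) k' j).im := by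
    funext U; simp [rE, Complex.mul_re]
  rw [h]
  exact ((Complex.measurable_re.comp (measE k j)).mul
    (Complex.measurable_re.comp (measE k' j))).add
    ((Complex.measurable_im.comp (measE k j)).mul (Complex.measurable_im.comp (measE k' j)))

lemma rE_sq_le (k k' j : Fin d) (U : Gd d) : rE k k' j U * rE k k' j U ≤ 1 := by
  have h := rs_sq k k' j U
  nlinarith [mul_self_nonneg (sE k k' j U), ent_nonneg k j U, ent_nonneg k' j U,
    ent_le_one k j U, ent_le_one k' j U]

lemma rE_abs_le (k k' j : Fin d) (U : Gd d) : |rE k k' j U| ≤ 1 := by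
  have h := rE_sq_le k k' j U
  rw [abs_le]; constructor <;> nlinarith

/-! ### Invariance of the integral -/

lemma intInv (μ : Measure (Gd d)) (hinv : ∀ V : Gd d,
      Measure.map (fun U : Gd d => V * U) μ = μ)
    (V : Gd d) (f : Gd d → ℝ) (hm : Measurable f) :
    ∫ U, f (V * U) ∂μ = ∫ U, f U ∂μ := by
  conv_rhs => rw [← hinv V]
  rw [integral_map (mulMeas V).aemeasurable]
  rw [hinv V]; exact hm.aestronglyMeasurable

lemma intgr (μ : Measure (Gd d)) [IsProbabilityMeasure μ] (f : Gd d → ℝ) (hm : Measurable f)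
    (C : ℝ) (hb : ∀ U, |f U| ≤ C) : Integrable f μ :=
  ⟨hm.aestronglyMeasurable, HasFiniteIntegral.of_bounded (C := C)
    (Filter.Eventually.of_forall (by simpa [Real.norm_eq_abs] using hb))⟩

/-! ### Concrete unitaries -/

def phaseU (z : ℂ) (hz : Complex.normSq z = 1) (k : Fin d) : Gd d :=
  ⟨Matrix.diagonal (fun m => if m = k then z else 1), by
    rw [Matrix.mem_unitaryGroup_iff']
    rw [Matrix.star_eq_conjTranspose, Matrix.diagonal_conjTranspose, Matrix.diagonal_mul_diagonal]
    ext i j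
    by_cases h : i = j
    · subst h
      by_cases h2 : i = k <;>
        simp [Matrix.diagonal_apply_eq, Matrix.one_apply_eq, h2, Pi.star_apply,
          Complex.star_def, ← Complex.normSq_eq_conj_mul_self, hz]
    · simp [Matrix.diagonal_apply_ne _ h, Matrix.one_apply_ne h]⟩

lemma phaseU_apply (z : ℂ) (hz : Complex.normSq z = 1) (k : Fin d) (U : Gd d) (i j : Fin d) :
    ((phaseU z hz k * U : Gd d) : Matrix (Fin d) (Fin d) ℂ) i j
      = (if i = k then z else 1) * (U : Matrix (Fin d) (Fin d) ℂ) i j := by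
  have h : ((phaseU z hz k * U : Gd d) : Matrix (Fin d) (Fin d) ℂ)
      = Matrix.diagonal (fun m => if m = k then z else 1) * (U : Matrix (Fin d) (Fin d) ℂ) := rfl
  rw [h, Matrix.diagonal_mul]

def cz : ℂ := ((Real.sqrt 2)⁻¹ : ℝ)

lemma conj_cz : (starRingEnd ℂ) cz = cz := Complex.conj_ofReal _

lemma czr_sq : ((Real.sqrt 2)⁻¹ * (Real.sqrt 2)⁻¹ : ℝ) = 1/2 := by
  rw [← mul_inv, Real.mul_self_sqrt (by norm_num : (0:ℝ) ≤ 2)]; norm_num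

lemma cz_sq : cz * cz = 1/2 := by
  rw [cz, ← Complex.ofReal_mul, czr_sq]; norm_num

lemma normSq_cz : Complex.normSq cz = 1/2 := by
  rw [cz, Complex.normSq_ofReal, czr_sq]

lemma sum_split (k k' : Fin d) (h : k ≠ k') (f : Fin d → ℂ) :
    ∑ m, f m = f k + f k' + ∑ m ∈ (Finset.univ.erase k).erase k', f m := by
  rw [← Finset.add_sum_erase _ f (Finset.mem_univ k),
      ← Finset.add_sum_erase _ f (a := k') (by simp [h.symm])]
  ring

def rotM (k k' : Fin d) : Matrix (Fin d) (Fin d) ℂ :=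
  fun i j => if i = k then (if j = k then cz else if j = k' then cz else 0)
    else if i = k' then (if j = k then -cz else if j = k' then cz else 0)
    else if i = j then 1 else 0

lemma rot_mem (k k' : Fin d) (h : k ≠ k') : rotM k k' ∈ Matrix.unitaryGroup (Fin d) ℂ := by
  rw [Matrix.mem_unitaryGroup_iff']
  ext i j
  rw [Matrix.mul_apply, Matrix.one_apply]
  simp only [Matrix.star_apply, Complex.star_def]
  rw [sum_split k k' h]
  have hres : ∑ m ∈ (Finset.univ.erase k).erase k',
      (starRingEnd ℂ) (rotM k k' m i) * rotM k k' m j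
      = if i ∈ (Finset.univ.erase k).erase k' then (if i = j then 1 else 0) else 0 := by
    rw [← Finset.sum_ite_eq' ((Finset.univ.erase k).erase k') i
        (fun m => if m = j then (1:ℂ) else 0)]
    apply Finset.sum_congr rfl
    intro m hm
    simp only [Finset.mem_erase] at hm
    simp only [rotM, if_neg hm.2.1, if_neg hm.1]
    by_cases h1 : m = i <;> by_cases h2 : m = j <;> simp [h1, h2]
  rw [hres]
  simp only [Finset.mem_erase, Finset.mem_univ, and_true]
  by_cases hik : i = k <;> by_cases hik' : i = k' <;> by_cases hjk : j = k <;>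
    by_cases hjk' : j = k' <;>
    simp_all [rotM, conj_cz, cz_sq, map_neg] <;> ring_nf (config := { ifUnchanged := .silent }) <;> simp_all [eq_comm]

def rotU (k k' : Fin d) (h : k ≠ k') : Gd d := ⟨rotM k k', rot_mem k k' h⟩

lemma rot_coe (k k' : Fin d) (h : k ≠ k') (U : Gd d) :
    ((rotU k k' h * U : Gd d) : Matrix (Fin d) (Fin d) ℂ)
      = rotM k k' * (U : Matrix (Fin d) (Fin d) ℂ) := rfl

lemma rot_apply_k (k k' : Fin d) (h : k ≠ k') (U : Gd d) (j : Fin d) :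
    ((rotU k k' h * U : Gd d) : Matrix (Fin d) (Fin d) ℂ) k j
      = cz * ((U : Matrix (Fin d) (Fin d) ℂ) k j + (U : Matrix (Fin d) (Fin d) ℂ) k' j) := by
  rw [rot_coe, Matrix.mul_apply, sum_split k k' h]
  have hz : ∑ m ∈ (Finset.univ.erase k).erase k',
      rotM k k' k m * (U : Matrix (Fin d) (Fin d) ℂ) m j = 0 := by
    apply Finset.sum_eq_zero
    intro m hm
    simp only [Finset.mem_erase] at hm
    simp [rotM, hm.1, hm.2.1, Ne.symm hm.1, Ne.symm hm.2.1]
  rw [hz]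
  simp [rotM, h, Ne.symm h]
  ring

lemma rot_apply_k' (k k' : Fin d) (h : k ≠ k') (U : Gd d) (j : Fin d) :
    ((rotU k k' h * U : Gd d) : Matrix (Fin d) (Fin d) ℂ) k' j
      = cz * ((U : Matrix (Fin d) (Fin d) ℂ) k' j - (U : Matrix (Fin d) (Fin d) ℂ) k j) := by
  rw [rot_coe, Matrix.mul_apply, sum_split k k' h]
  have hz : ∑ m ∈ (Finset.univ.erase k).erase k',
      rotM k k' k' m * (U : Matrix (Fin d) (Fin d) ℂ) m j = 0 := by
    apply Finset.sum_eq_zero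
    intro m hm
    simp only [Finset.mem_erase] at hm
    simp [rotM, hm.1, hm.2.1, Ne.symm hm.1, Ne.symm hm.2.1]
  rw [hz]
  simp [rotM, h, Ne.symm h]
  ring

/-! ### Pointwise transformation identities -/

lemma ent_phase (z : ℂ) (hz : Complex.normSq z = 1) (k m j : Fin d) (U : Gd d) :
    ent m j (phaseU z hz k * U) = ent m j U := by
  simp only [ent, phaseU_apply]
  by_cases h : m = k <;> simp [h, Complex.normSq_mul, hz]

lemma rE_phase_neg (k k' j : Fin d) (h : k ≠ k') (U : Gd d) :
    rE k k' j (phaseU (-1) (by simp) k * U) = - rE k k' j U := by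
  simp only [rE, phaseU_apply]
  rw [if_true, if_neg h.symm, one_mul, neg_one_mul, neg_mul, Complex.neg_re]

lemma rE_phase_I (k k' j : Fin d) (h : k ≠ k') (U : Gd d) :
    rE k k' j (phaseU I (by simp) k * U) = - sE k k' j U := by
  simp only [rE, sE, phaseU_apply]
  rw [if_true, if_neg h.symm, one_mul, mul_assoc, Complex.I_mul_re]

lemma ent_rot_k (k k' j : Fin d) (h : k ≠ k') (U : Gd d) :
    ent k j (rotU k k' h * U) = (ent k j U + ent k' j U + 2 * rE k k' j U) / 2 := by
  simp only [ent, rE, rot_apply_k]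
  rw [Complex.normSq_mul, normSq_cz, Complex.normSq_add]
  ring

lemma ent_rot_k' (k k' j : Fin d) (h : k ≠ k') (U : Gd d) :
    ent k' j (rotU k k' h * U) = (ent k j U + ent k' j U - 2 * rE k k' j U) / 2 := by
  simp only [ent, rE, rot_apply_k']
  rw [Complex.normSq_mul, normSq_cz, Complex.normSq_sub]
  have : (((U : Matrix (Fin d) (Fin d) ℂ) k' j) *
      (starRingEnd ℂ) ((U : Matrix (Fin d) (Fin d) ℂ) k j)).re
      = (((U : Matrix (Fin d) (Fin d) ℂ) k j) *
      (starRingEnd ℂ) ((U : Matrix (Fin d) (Fin d) ℂ) k' j)).re := by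
    rw [show ((U : Matrix (Fin d) (Fin d) ℂ) k' j) *
      (starRingEnd ℂ) ((U : Matrix (Fin d) (Fin d) ℂ) k j)
      = (starRingEnd ℂ) (((U : Matrix (Fin d) (Fin d) ℂ) k j) *
        (starRingEnd ℂ) ((U : Matrix (Fin d) (Fin d) ℂ) k' j)) by rw [_root_.map_mul, Complex.conj_conj]; ring]
    exact Complex.conj_re _
  rw [this]
  ring

lemma pairMoments (μ : Measure (Gd d)) [IsProbabilityMeasure μ]
    (hinv : ∀ V : Gd d, Measure.map (fun U : Gd d => V * U) μ = μ)
    (j k k' : Fin d) (h : k ≠ k') :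
    (∫ U, ent k j U ∂μ = ∫ U, ent k' j U ∂μ) ∧
    (∫ U, ent k j U * ent k j U ∂μ = ∫ U, ent k' j U * ent k' j U ∂μ) ∧
    (∫ U, ent k j U * ent k j U ∂μ = 2 * ∫ U, ent k j U * ent k' j U ∂μ) := by
  set a : Gd d → ℝ := ent k j with ha
  set b : Gd d → ℝ := ent k' j with hb
  set r : Gd d → ℝ := rE k k' j with hr
  set s : Gd d → ℝ := sE k k' j with hs
  have ma : Measurable a := ent_meas k j
  have mb : Measurable b := ent_meas k' j
  have mr : Measurable r := rE_meas k k' j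
  have bnd_a : ∀ U, |a U| ≤ 1 := fun U => by
    rw [ha, _root_.abs_of_nonneg (ent_nonneg k j U)]; exact ent_le_one k j U
  have bnd_b : ∀ U, |b U| ≤ 1 := fun U => by
    rw [hb, _root_.abs_of_nonneg (ent_nonneg k' j U)]; exact ent_le_one k' j U
  have bnd_r : ∀ U, |r U| ≤ 1 := rE_abs_le k k' j
  have prodb : ∀ (f g : Gd d → ℝ), (∀ U, |f U| ≤ 1) → (∀ U, |g U| ≤ 1) →
      ∀ U, |f U * g U| ≤ 1 := fun f g hf hg U => by
    rw [abs_mul]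
    exact mul_le_one₀ (hf U) (abs_nonneg _) (hg U)
  have ia : Integrable a μ := intgr μ a ma 1 bnd_a
  have ib : Integrable b μ := intgr μ b mb 1 bnd_b
  have ir : Integrable r μ := intgr μ r mr 1 bnd_r
  have iaa : Integrable (fun U => a U * a U) μ := intgr μ _ (ma.mul ma) 1 (prodb a a bnd_a bnd_a)
  have ibb : Integrable (fun U => b U * b U) μ := intgr μ _ (mb.mul mb) 1 (prodb b b bnd_b bnd_b)
  have iab : Integrable (fun U => a U * b U) μ := intgr μ _ (ma.mul mb) 1 (prodb a b bnd_a bnd_b)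
  have iar : Integrable (fun U => a U * r U) μ := intgr μ _ (ma.mul mr) 1 (prodb a r bnd_a bnd_r)
  have ibr : Integrable (fun U => b U * r U) μ := intgr μ _ (mb.mul mr) 1 (prodb b r bnd_b bnd_r)
  have irr : Integrable (fun U => r U * r U) μ := intgr μ _ (mr.mul mr) 1 (prodb r r bnd_r bnd_r)
  -- phase (-1) kills r-linear terms
  have hV1 : ∀ (f : Gd d → ℝ), Measurable f →
      (∀ U, f (phaseU (-1) (by simp) k * U) = - f U) → ∫ U, f U ∂μ = 0 := by
    intro f mf hf
    have e := intInv μ hinv (phaseU (-1) (by simp) k) f mf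
    have e2 : ∫ U, f (phaseU (-1) (by simp) k * U) ∂μ = ∫ U, - f U ∂μ := by
      congr 1; funext U; exact hf U
    rw [e2, integral_neg] at e
    linarith
  have hr0 : ∫ U, r U ∂μ = 0 := hV1 r mr (fun U => rE_phase_neg k k' j h U)
  have har0 : ∫ U, a U * r U ∂μ + ∫ U, b U * r U ∂μ = 0 := by
    have e := hV1 (fun U => a U * r U + b U * r U) ((ma.mul mr).add (mb.mul mr))
      (fun U => by
        simp only [ha, hb, hr, ent_phase, rE_phase_neg k k' j h U]; ring)
    rw [integral_add iar ibr] at e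
    exact e
  -- phase I : ∫ r² = ∫ s²
  have hrs : ∫ U, r U * r U ∂μ = ∫ U, s U * s U ∂μ := by
    have e := intInv μ hinv (phaseU I (by simp) k) (fun U => r U * r U) (mr.mul mr)
    have e2 : ∫ U, r (phaseU I (by simp) k * U) * r (phaseU I (by simp) k * U) ∂μ
        = ∫ U, s U * s U ∂μ := by
      congr 1; funext U
      rw [hr, rE_phase_I k k' j h U]; ring
    rw [← e, e2]
  -- r² + s² = ab
  have hrr : ∫ U, r U * r U ∂μ = (∫ U, a U * b U ∂μ) / 2 := by
    have iss : Integrable (fun U => s U * s U) μ := by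
      have hpt : (fun U => s U * s U) = fun U => a U * b U - r U * r U := by
        funext U; have := rs_sq k k' j U; simp only [ha, hb, hr, hs] at *; linarith
      rw [hpt]; exact iab.sub irr
    have e : ∫ U, (r U * r U + s U * s U) ∂μ = ∫ U, a U * b U ∂μ := by
      congr 1; funext U; exact rs_sq k k' j U
    rw [integral_add irr iss, ← hrs] at e
    linarith
  -- rotation: first moments
  have hma : ∫ U, a U ∂μ = ∫ U, b U ∂μ := by
    have e := intInv μ hinv (rotU k k' h) a ma
    have e2 : ∫ U, a (rotU k k' h * U) ∂μ = ∫ U, (a U / 2 + b U / 2 + r U) ∂μ := by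
      congr 1; funext U
      rw [ha, ent_rot_k k k' j h U]; simp only [ha, hb, hr]; ring
    have i1 : Integrable (fun U => a U / 2 + b U / 2) μ := by
      exact (ia.div_const 2).add (ib.div_const 2)
    rw [e2, integral_add i1 ir, integral_add (ia.div_const 2) (ib.div_const 2),
      integral_div, integral_div, hr0] at e
    linarith
  -- rotation: second moments
  have key2 : ∀ (ε : ℝ) (f : Gd d → ℝ), Measurable f →
      (∀ U, f (rotU k k' h * U) = a U * a U / 4 + b U * b U / 4 + a U * b U / 2
        + ε * (a U * r U + b U * r U) + r U * r U) →
      ∫ U, f U ∂μ = (∫ U, a U * a U ∂μ) / 4 + (∫ U, b U * b U ∂μ) / 4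
        + (∫ U, a U * b U ∂μ) / 2 + ε * (∫ U, a U * r U ∂μ + ∫ U, b U * r U ∂μ)
        + ∫ U, r U * r U ∂μ := by
    intro ε f mf hf
    have e := intInv μ hinv (rotU k k' h) f mf
    have e2 : ∫ U, f (rotU k k' h * U) ∂μ = ∫ U, (a U * a U / 4 + b U * b U / 4
        + a U * b U / 2 + ε * (a U * r U + b U * r U) + r U * r U) ∂μ := by
      congr 1; funext U; exact hf U
    rw [e2] at e
    have j1 : Integrable (fun U => a U * a U / 4) μ := iaa.div_const 4
    have j2 : Integrable (fun U => b U * b U / 4) μ := ibb.div_const 4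
    have j3 : Integrable (fun U => a U * b U / 2) μ := iab.div_const 2
    have j4 : Integrable (fun U => ε * (a U * r U + b U * r U)) μ := by
      exact (iar.add ibr).const_mul ε
    have j12 : Integrable (fun U => a U * a U / 4 + b U * b U / 4) μ := by exact j1.add j2
    have j123 : Integrable (fun U => a U * a U / 4 + b U * b U / 4 + a U * b U / 2) μ := by
      exact j12.add j3
    have j1234 : Integrable (fun U => a U * a U / 4 + b U * b U / 4 + a U * b U / 2
        + ε * (a U * r U + b U * r U)) μ := by exact j123.add j4
    rw [integral_add j1234 irr, integral_add j123 j4, integral_add j12 j3,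
      integral_add j1 j2, integral_const_mul ε, integral_add iar ibr,
      integral_div, integral_div, integral_div] at e
    linarith
  have e1 := key2 1 (fun U => a U * a U) (ma.mul ma) (fun U => by
    simp only [ha, hb, hr, ent_rot_k k k' j h U]; ring)
  have e2 := key2 (-1) (fun U => b U * b U) (mb.mul mb) (fun U => by
    simp only [ha, hb, hr, ent_rot_k' k k' j h U]; ring)
  refine ⟨hma, ?_, ?_⟩ <;> [skip; skip] <;> simp only [ha, hb, hr] at * <;> linarith

lemma iE (μ : Measure (Gd d)) [IsProbabilityMeasure μ] (k j : Fin d) :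
    Integrable (ent k j) μ :=
  intgr μ _ (ent_meas k j) 1 (fun U => by
    rw [_root_.abs_of_nonneg (ent_nonneg k j U)]; exact ent_le_one k j U)

lemma iEE (μ : Measure (Gd d)) [IsProbabilityMeasure μ] (k k' j : Fin d) :
    Integrable (fun U => ent k j U * ent k' j U) μ :=
  intgr μ _ ((ent_meas k j).mul (ent_meas k' j)) 1 (fun U => by
    rw [abs_mul, _root_.abs_of_nonneg (ent_nonneg k j U),
      _root_.abs_of_nonneg (ent_nonneg k' j U)]
    exact mul_le_one₀ (ent_le_one k j U) (ent_nonneg k' j U) (ent_le_one k' j U))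

lemma mom1 (hd : 1 ≤ d) (μ : Measure (Gd d)) [IsProbabilityMeasure μ]
    (hinv : ∀ V : Gd d, Measure.map (fun U : Gd d => V * U) μ = μ) (k j : Fin d) :
    ∫ U, ent k j U ∂μ = 1 / d := by
  have hd0 : (d : ℝ) ≠ 0 := by positivity
  have h1 : ∫ U, (∑ k', ent k' j U) ∂μ = 1 := by
    have hpt : (fun U : Gd d => ∑ k', ent k' j U) = fun _ => (1:ℝ) :=
      funext fun U => sum_ent U j
    rw [hpt]; simp
  rw [integral_finset_sum _ (fun i _ => iE μ i j)] at h1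
  have h3 : ∀ k', ∫ U, ent k' j U ∂μ = ∫ U, ent k j U ∂μ := by
    intro k'
    rcases eq_or_ne k' k with rfl | hne
    · rfl
    · exact (pairMoments μ hinv j k' k hne).1
  rw [Finset.sum_congr rfl (fun k' _ => h3 k'), Finset.sum_const, Finset.card_univ,
    Fintype.card_fin, nsmul_eq_mul] at h1
  field_simp
  linear_combination h1

lemma mom2 (hd : 1 ≤ d) (μ : Measure (Gd d)) [IsProbabilityMeasure μ]
    (hinv : ∀ V : Gd d, Measure.map (fun U : Gd d => V * U) μ = μ) (j : Fin d) :
    (∀ k, ∫ U, ent k j U * ent k j U ∂μ = 2 * (1 / ((d:ℝ) * ((d:ℝ)+1)))) ∧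
    (∀ k k', k ≠ k' → ∫ U, ent k j U * ent k' j U ∂μ = 1 / ((d:ℝ) * ((d:ℝ)+1))) := by
  have hd0 : (d : ℝ) ≠ 0 := by positivity
  set k0 : Fin d := ⟨0, hd⟩ with hk0
  set Q : ℝ := ∫ U, ent k0 j U * ent k0 j U ∂μ with hQ
  have hq : ∀ k, ∫ U, ent k j U * ent k j U ∂μ = Q := by
    intro k
    rcases eq_or_ne k k0 with rfl | hne
    · rfl
    · exact (pairMoments μ hinv j k k0 hne).2.1
  have hp : ∀ k k', k ≠ k' → ∫ U, ent k j U * ent k' j U ∂μ = Q / 2 := by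
    intro k k' hne
    have h1 := (pairMoments μ hinv j k k' hne).2.2
    rw [hq k] at h1
    linarith
  -- total second moment
  have h1 : ∫ U, (∑ k, ∑ k', ent k j U * ent k' j U) ∂μ = 1 := by
    have hpt : (fun U : Gd d => ∑ k, ∑ k', ent k j U * ent k' j U) = fun _ => (1:ℝ) := by
      funext U
      rw [← Finset.sum_mul_sum, sum_ent U j]; norm_num
    rw [hpt]; simp
  rw [integral_finset_sum _ (fun k _ => integrable_finset_sum _ (fun k' _ => iEE μ k k' j))]
    at h1
  rw [Finset.sum_congr rfl (fun k _ => integral_finset_sum _ (fun k' _ => iEE μ k k' j))] at h1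
  have h2 : ∀ k : Fin d, ∑ k', ∫ U, ent k j U * ent k' j U ∂μ = (d:ℝ) * (Q/2) + Q/2 := by
    intro k
    have hub : ∀ k' : Fin d, ∫ U, ent k j U * ent k' j U ∂μ
        = Q/2 + (if k = k' then Q/2 else 0) := by
      intro k'
      rcases eq_or_ne k k' with rfl | hne
      · rw [hq k, if_pos rfl]; ring
      · rw [hp k k' hne, if_neg hne]; ring
    rw [Finset.sum_congr rfl (fun k' _ => hub k'), Finset.sum_add_distrib, Finset.sum_const,
      Finset.card_univ, Fintype.card_fin, Finset.sum_ite_eq Finset.univ k (fun _ => Q/2),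
      if_pos (Finset.mem_univ k), nsmul_eq_mul]
  rw [Finset.sum_congr rfl (fun k _ => h2 k), Finset.sum_const, Finset.card_univ,
    Fintype.card_fin, nsmul_eq_mul] at h1
  have hQval : Q = 2 * (1 / ((d:ℝ) * ((d:ℝ)+1))) := by
    have hdd : (d:ℝ) * ((d:ℝ)+1) ≠ 0 := by positivity
    field_simp
    linear_combination 2 * h1
  constructor
  · intro k; rw [hq k, hQval]
  · intro k k' hne; rw [hp k k' hne, hQval]; ring

end StmtAux

theorem stmt_11 (d : ℕ) (hd : 1 ≤ d) (lam : Fin d → ℝ)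
    (μ : Measure (Matrix.unitaryGroup (Fin d) ℂ)) [IsProbabilityMeasure μ]
    (hinv : ∀ V : Matrix.unitaryGroup (Fin d) ℂ,
      Measure.map (fun U : Matrix.unitaryGroup (Fin d) ℂ => V * U) μ = μ) :
    ∫ U : Matrix.unitaryGroup (Fin d) ℂ,
        ∑ j, (‖
          ((star (U : Matrix (Fin d) (Fin d) ℂ) * Matrix.diagonal (fun k => (lam k : ℂ)) *
              (U : Matrix (Fin d) (Fin d) ℂ)) j j - (∑ k, lam k) / d)‖) ^ 2 ∂μ =
      (∑ j, lam j ^ 2) / (d + 1) - (∑ j, lam j) ^ 2 / (d * (d + 1)) := by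
  have hd0 : (d : ℝ) ≠ 0 := by positivity
  have hd1 : (d : ℝ) + 1 ≠ 0 := by positivity
  set S1 : ℝ := ∑ k, lam k with hS1
  set S2 : ℝ := ∑ k, lam k ^ 2 with hS2
  set c : ℝ := S1 / d with hc
  set N : ℝ := 1 / ((d:ℝ) * ((d:ℝ)+1)) with hN
  have hentry : ∀ (U : Gd d) (j : Fin d),
      (star (U : Matrix (Fin d) (Fin d) ℂ) * Matrix.diagonal (fun k => (lam k : ℂ)) *
        (U : Matrix (Fin d) (Fin d) ℂ)) j j = ((∑ k, lam k * ent k j U : ℝ) : ℂ) := by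
    intro U j
    rw [Matrix.mul_apply]
    have hterm : ∀ n, (star (U : Matrix (Fin d) (Fin d) ℂ) *
        Matrix.diagonal (fun k => (lam k : ℂ))) j n * (U : Matrix (Fin d) (Fin d) ℂ) n j
        = ((lam n * ent n j U : ℝ) : ℂ) := by
      intro n
      rw [Matrix.mul_diagonal, Matrix.star_apply]
      have hre : (star ((U : Matrix (Fin d) (Fin d) ℂ) n j) * (lam n : ℂ)) *
          (U : Matrix (Fin d) (Fin d) ℂ) n j
          = (lam n : ℂ) * (((starRingEnd ℂ) ((U : Matrix (Fin d) (Fin d) ℂ) n j)) *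
            (U : Matrix (Fin d) (Fin d) ℂ) n j) := by
        rw [Complex.star_def]; ring
      rw [hre, ← Complex.normSq_eq_conj_mul_self]
      push_cast
      rw [ent]
    rw [Finset.sum_congr rfl (fun n _ => hterm n)]
    norm_cast
  have hpt : ∀ U : Gd d, ∑ j, (‖
      ((star (U : Matrix (Fin d) (Fin d) ℂ) * Matrix.diagonal (fun k => (lam k : ℂ)) *
        (U : Matrix (Fin d) (Fin d) ℂ)) j j - (∑ k, lam k) / d)‖) ^ 2
      = ∑ j, (∑ k, lam k * ent k j U - c) ^ 2 := by
    intro U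
    apply Finset.sum_congr rfl
    intro j _
    rw [hentry U j]
    rw [show ((∑ k, lam k * ent k j U : ℝ) : ℂ) - (∑ k, (lam k : ℝ)) / (d : ℕ)
        = ((∑ k, lam k * ent k j U - c : ℝ) : ℂ) by
      rw [hc, hS1]; push_cast; ring]
    rw [Complex.norm_real, Real.norm_eq_abs, _root_.sq_abs]
  rw [integral_congr_ae (Filter.Eventually.of_forall hpt)]
  -- integrability
  have mS : ∀ j : Fin d, Measurable (fun U : Gd d => ∑ k, lam k * ent k j U) :=
    fun j => Finset.measurable_sum _ (fun k _ => (ent_meas k j).const_mul (lam k))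
  have hSb : ∀ (j : Fin d) (U : Gd d), |∑ k, lam k * ent k j U| ≤ ∑ k, |lam k| := by
    intro j U
    refine (Finset.abs_sum_le_sum_abs _ _).trans (Finset.sum_le_sum (fun k _ => ?_))
    rw [abs_mul]
    exact mul_le_of_le_one_right (abs_nonneg _) (by
      rw [_root_.abs_of_nonneg (ent_nonneg k j U)]; exact ent_le_one k j U)
  have iSk : ∀ j k : Fin d, Integrable (fun U : Gd d => lam k * ent k j U) μ :=
    fun j k => (iE μ k j).const_mul (lam k)
  have iS : ∀ j : Fin d, Integrable (fun U : Gd d => ∑ k, lam k * ent k j U) μ :=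
    fun j => integrable_finset_sum _ (fun k _ => iSk j k)
  have iSS : ∀ j : Fin d, Integrable (fun U : Gd d =>
      (∑ k, lam k * ent k j U) * (∑ k, lam k * ent k j U)) μ := by
    intro j
    refine intgr μ _ ((mS j).mul (mS j)) ((∑ k, |lam k|) * (∑ k, |lam k|)) (fun U => ?_)
    rw [abs_mul]
    exact mul_le_mul (hSb j U) (hSb j U) (abs_nonneg _)
      (Finset.sum_nonneg fun k _ => abs_nonneg _)
  have ig : ∀ j : Fin d, Integrable (fun U : Gd d => (∑ k, lam k * ent k j U - c) ^ 2) μ := by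
    intro j
    refine intgr μ _ (((mS j).sub measurable_const).pow_const 2)
      (((∑ k, |lam k|) + |c|) ^ 2) (fun U => ?_)
    have h1 : |∑ k, lam k * ent k j U - c| ≤ (∑ k, |lam k|) + |c| := by
      rw [sub_eq_add_neg]
      refine (abs_add_le _ _).trans ?_
      rw [abs_neg]
      exact add_le_add (hSb j U) le_rfl
    rw [_root_.abs_pow]
    exact pow_le_pow_left₀ (abs_nonneg _) h1 2
  rw [integral_finset_sum _ (fun j _ => ig j)]
  -- per-j value
  have hIS : ∀ j : Fin d, ∫ U, (∑ k, lam k * ent k j U) ∂μ = S1 * (1/d) := by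
    intro j
    rw [integral_finset_sum _ (fun k _ => iSk j k)]
    rw [Finset.sum_congr rfl (fun k _ => by
      rw [integral_const_mul, mom1 hd μ hinv k j] : ∀ k ∈ Finset.univ,
        ∫ U, lam k * ent k j U ∂μ = lam k * (1/(d:ℝ)))]
    rw [← Finset.sum_mul, ← hS1]
  have hISS : ∀ j : Fin d, ∫ U, (∑ k, lam k * ent k j U) * (∑ k, lam k * ent k j U) ∂μ
      = (S1 * S1 + S2) * N := by
    intro j
    have hpt2 : (fun U : Gd d => (∑ k, lam k * ent k j U) * (∑ k, lam k * ent k j U))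
        = fun U => ∑ k, ∑ k', lam k * lam k' * (ent k j U * ent k' j U) := by
      funext U
      rw [Finset.sum_mul_sum]
      exact Finset.sum_congr rfl fun k _ => Finset.sum_congr rfl fun k' _ => by ring
    rw [hpt2, integral_finset_sum _ (fun k _ => integrable_finset_sum _
      (fun k' _ => by exact (iEE μ k k' j).const_mul (lam k * lam k')))]
    rw [Finset.sum_congr rfl (fun k _ => integral_finset_sum _
      (fun k' _ => by exact (iEE μ k k' j).const_mul (lam k * lam k')))]
    have hM : ∀ k k' : Fin d, ∫ U, lam k * lam k' * (ent k j U * ent k' j U) ∂μ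
        = lam k * lam k' * N + (if k = k' then lam k * lam k' * N else 0) := by
      intro k k'
      rw [integral_const_mul]
      rcases eq_or_ne k k' with rfl | hne
      · rw [(mom2 hd μ hinv j).1 k, if_pos rfl, ← hN]; ring
      · rw [(mom2 hd μ hinv j).2 k k' hne, if_neg hne, ← hN]; ring
    rw [Finset.sum_congr rfl (fun k _ => Finset.sum_congr rfl (fun k' _ => hM k k'))]
    have hrow : ∀ k : Fin d, ∑ k', (lam k * lam k' * N
        + (if k = k' then lam k * lam k' * N else 0))
        = lam k * S1 * N + lam k * lam k * N := by
      intro k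
      rw [Finset.sum_add_distrib,
        Finset.sum_ite_eq Finset.univ k (fun k' => lam k * lam k' * N),
        if_pos (Finset.mem_univ k)]
      congr 1
      have e : ∑ k', lam k * lam k' * N = (∑ k', lam k') * (lam k * N) := by
        rw [Finset.sum_mul]
        exact Finset.sum_congr rfl fun k' _ => by ring
      rw [e, ← hS1]; ring
    rw [Finset.sum_congr rfl (fun k _ => hrow k), Finset.sum_add_distrib]
    have f1 : ∑ k, lam k * S1 * N = S1 * S1 * N := by
      have e : ∑ k, lam k * S1 * N = (∑ k, lam k) * (S1 * N) := by
        rw [Finset.sum_mul]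
        exact Finset.sum_congr rfl fun k _ => by ring
      rw [e, ← hS1]; ring
    have f2 : ∑ k, lam k * lam k * N = S2 * N := by
      have e : ∑ k, lam k * lam k * N = (∑ k, lam k ^ 2) * N := by
        rw [Finset.sum_mul]
        exact Finset.sum_congr rfl fun k _ => by rw [pow_two]
      rw [e, ← hS2]
    rw [f1, f2]; ring
  have hTj : ∀ j : Fin d, ∫ U, (∑ k, lam k * ent k j U - c) ^ 2 ∂μ
      = (S1 * S1 + S2) * N - 2 * c * (S1 * (1/d)) + c * c := by
    intro j
    rw [show (fun U : Gd d => (∑ k, lam k * ent k j U - c) ^ 2)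
        = fun U => ((∑ k, lam k * ent k j U) * (∑ k, lam k * ent k j U)
          - (2*c) * (∑ k, lam k * ent k j U) + c*c) from funext fun U => by ring]
    have i1 : Integrable (fun U : Gd d => (∑ k, lam k * ent k j U) * (∑ k, lam k * ent k j U)
        - (2*c) * (∑ k, lam k * ent k j U)) μ := by
      exact (iSS j).sub ((iS j).const_mul (2*c))
    rw [integral_add i1 (integrable_const _),
      integral_sub (iSS j) ((iS j).const_mul (2*c)),
      integral_const_mul, integral_const, hISS j, hIS j]
    simp [measure_univ]
  rw [Finset.sum_congr rfl (fun j _ => hTj j), Finset.sum_const, Finset.card_univ,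
    Fintype.card_fin, nsmul_eq_mul]
  rw [hc, hN]
  field_simp
  ring
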